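/- Let m ≥ 2, n ≥ 1, 0 ≤ ℓ ≤ m, Λ = (n,…,n,0,…,0) ∈ ℤ^m with ℓ entries equal to n, and let ū, w̄ ∈ {1,…,m−1}^N. (i) If 1 ≤ t < N and |ū_t − ū_{t+1}| ≥ 2, and ū′ is obtained from ū by exchanging its t-th and (t+1)-st entries, then ⟪ū′,w̄⟫ = ⟪ū,w̄⟫. (ii) Likewise, if 1 ≤ t < N and |w̄_t − w̄_{t+1}| ≥ 2, and w̄′ is obtained from w̄ by exchanging its t-th and (t+1)-st entries, then ⟪ū,w̄′⟫ = ⟪ū,w̄⟫. (This is the combinatorial form of the paper's claim that the closed formula is independent of the chosen F-form: distant F-operators commute and produce the same web.) -/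
import Mathlib


open LaurentPolynomial Finset

noncomputable section

/-- The quantum integer `[a] = q^(a-1) + q^(a-3) + ⋯ + q^(-a+1)` for `a ≥ 0`,
with `[a] = -[-a]` for `a < 0`. -/
def qint (a : ℤ) : LaurentPolynomial ℤ :=
  if 0 ≤ a then ∑ i ∈ Finset.range a.toNat, T (a - 1 - 2 * i)
  else - ∑ i ∈ Finset.range (-a).toNat, T (-a - 1 - 2 * i)

/-- The quantum factorial `[b]! = [b][b-1]⋯[1]`. -/
def qfac (b : ℕ) : LaurentPolynomial ℤ :=
  ∏ i ∈ Finset.range b, qint (i + 1)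

/-- The simple root `α_i = e_i - e_{i+1} ∈ ℤ^m` (with `1 ≤ i ≤ m-1`, one-indexed
entries realized on `Fin m`). -/
def simpleRoot (m i : ℕ) : Fin m → ℤ :=
  fun j => (if (j : ℕ) + 1 = i then 1 else 0) - (if (j : ℕ) = i then 1 else 0)

/-- The standard dot product on `ℤ^m`. -/
def dotP {m : ℕ} (v w : Fin m → ℤ) : ℤ := ∑ j, v j * w j

/-- The highest weight `Λ = (n,…,n,0,…,0)` with `ℓ` entries equal to `n`. -/
def LambdaVec (m n ℓ : ℕ) : Fin m → ℤ := fun j => if (j : ℕ) < ℓ then (n : ℤ) else 0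

/-- `N^Λ(σ, ū, t) = ⟨Λ - ∑_{j ≤ t, σ(j) < σ(t)} α_{ū_j}, α_{ū_t}⟩`. -/
def Nwt {m N : ℕ} (Λ : Fin m → ℤ) (σ : Equiv.Perm (Fin N)) (u : Fin N → ℕ) (t : Fin N) : ℤ :=
  dotP (Λ - ∑ j ∈ Finset.univ.filter (fun j => j ≤ t ∧ σ j < σ t), simpleRoot m (u j))
    (simpleRoot m (u t))

/-- `X_σ = ∏_t [N^Λ(σ,ū,t)]·q^(N^Λ(e,ū,t) - 1)`. -/
def Xsig {m N : ℕ} (Λ : Fin m → ℤ) (σ : Equiv.Perm (Fin N)) (u : Fin N → ℕ) :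
    LaurentPolynomial ℤ :=
  ∏ t : Fin N, qint (Nwt Λ σ u t) * T (Nwt Λ 1 u t - 1)

/-- The set of possible crossings `S_ū^w̄ = {σ : ū_j = w̄_{σ(j)} for all j}`. -/
def Sset {N : ℕ} (u w : Fin N → ℕ) : Finset (Equiv.Perm (Fin N)) :=
  Finset.univ.filter fun σ => ∀ j, u j = w (σ j)

/-- The evaluation `⟪ū, w̄⟫ = ∑_{σ ∈ S_ū^w̄} X_σ`. -/
def pairing {m N : ℕ} (Λ : Fin m → ℤ) (u w : Fin N → ℕ) : LaurentPolynomial ℤ :=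
  ∑ σ ∈ Sset u w, Xsig Λ σ u

/-! ### Auxiliary lemmas -/

lemma dotP_sub' {m : ℕ} (v x y : Fin m → ℤ) : dotP (v - x) y = dotP v y - dotP x y := by
  simp [dotP, sub_mul, Finset.sum_sub_distrib]

lemma dotP_sum' {m N : ℕ} (S : Finset (Fin N)) (f : Fin N → Fin m → ℤ) (y : Fin m → ℤ) :
    dotP (∑ j ∈ S, f j) y = ∑ j ∈ S, dotP (f j) y := by
  simp only [dotP, Finset.sum_apply, Finset.sum_mul]
  exact Finset.sum_comm

lemma Nwt_expand {m N : ℕ} (Λ : Fin m → ℤ) (σ : Equiv.Perm (Fin N)) (u : Fin N → ℕ)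
    (t : Fin N) :
    Nwt Λ σ u t = dotP Λ (simpleRoot m (u t))
      - ∑ j ∈ Finset.univ.filter (fun j => j ≤ t ∧ σ j < σ t),
          dotP (simpleRoot m (u j)) (simpleRoot m (u t)) := by
  rw [Nwt, dotP_sub', dotP_sum']

/-- Distant simple roots are orthogonal. -/
lemma orth_simpleRoot {m a b : ℕ} (h : 2 ≤ |(a : ℤ) - (b : ℤ)|) :
    dotP (simpleRoot m a) (simpleRoot m b) = 0 := by
  have h' : (a : ℤ) + 2 ≤ b ∨ (b : ℤ) + 2 ≤ a := by
    rcases abs_cases ((a : ℤ) - b) with ⟨h1, _⟩ | ⟨h1, _⟩ <;> omega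
  refine Finset.sum_eq_zero fun j _ => ?_
  simp only [simpleRoot]
  split_ifs <;> first | (exfalso; omega) | norm_num

lemma sum_filter_congr' {ι : Type*} [Fintype ι] (P Q : ι → Prop) [DecidablePred P]
    [DecidablePred Q] (g : ι → ℤ) (h : ∀ j, (P j ↔ Q j) ∨ g j = 0) :
    ∑ j ∈ Finset.univ.filter P, g j = ∑ j ∈ Finset.univ.filter Q, g j := by
  rw [Finset.sum_filter, Finset.sum_filter]
  refine Finset.sum_congr rfl fun j _ => ?_
  rcases h j with h | h
  · exact if_congr h rfl rfl
  · simp [h]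

lemma sum_filter_perm {ι : Type*} [Fintype ι] [DecidableEq ι] (τ : Equiv.Perm ι)
    (P : ι → Prop) [DecidablePred P] (f : ι → ℤ) :
    ∑ j ∈ Finset.univ.filter P, f j
      = ∑ k ∈ Finset.univ.filter (fun k => P (τ k)), f (τ k) := by
  rw [Finset.sum_filter, Finset.sum_filter]
  exact (Equiv.sum_comp τ fun j => if P j then f j else 0).symm

lemma swap_le_iff' {N : ℕ} {a b : Fin N} (hab : (b : ℕ) = (a : ℕ) + 1) {k s : Fin N}
    (h1 : ¬(k = a ∧ s = b)) (h2 : ¬(k = b ∧ s = a)) :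
    (Equiv.swap a b k ≤ Equiv.swap a b s ↔ k ≤ s) := by
  simp only [Equiv.swap_apply_def, Fin.le_def, Fin.ext_iff] at *
  split_ifs <;> omega

lemma swap_lt_iff' {N : ℕ} {a b : Fin N} (hab : (b : ℕ) = (a : ℕ) + 1) {k s : Fin N}
    (h1 : ¬(k = a ∧ s = b)) (h2 : ¬(k = b ∧ s = a)) :
    (Equiv.swap a b k < Equiv.swap a b s ↔ k < s) := by
  simp only [Equiv.swap_apply_def, Fin.lt_def, Fin.ext_iff] at *
  split_ifs <;> omega

/-- Composing with a distant swap on the left does not change `Nwt`. -/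
lemma Nwt_swap_left {m N : ℕ} (Λ : Fin m → ℤ) (σ : Equiv.Perm (Fin N)) (u : Fin N → ℕ)
    {a b : Fin N} (hab : (b : ℕ) = (a : ℕ) + 1)
    (h0 : ∀ j r : Fin N, σ j = a → σ r = b →
      dotP (simpleRoot m (u j)) (simpleRoot m (u r)) = 0)
    (h0' : ∀ j r : Fin N, σ j = b → σ r = a →
      dotP (simpleRoot m (u j)) (simpleRoot m (u r)) = 0)
    (r : Fin N) :
    Nwt Λ (Equiv.swap a b * σ) u r = Nwt Λ σ u r := by
  rw [Nwt_expand, Nwt_expand]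
  congr 1
  apply sum_filter_congr'
  intro j
  by_cases hc : (σ j = a ∧ σ r = b) ∨ (σ j = b ∧ σ r = a)
  · right
    rcases hc with ⟨hj, hr⟩ | ⟨hj, hr⟩
    · exact h0 _ _ hj hr
    · exact h0' _ _ hj hr
  · left
    rw [not_or] at hc
    have hlt := swap_lt_iff' hab hc.1 hc.2
    simp only [Equiv.Perm.mul_apply]
    exact and_congr_right fun _ => hlt

/-- Composing with a distant swap on the right intertwines `Nwt` with the
swapped word. -/
lemma Nwt_swap_right {m N : ℕ} (Λ : Fin m → ℤ) (σ : Equiv.Perm (Fin N)) (u : Fin N → ℕ)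
    {a b : Fin N} (hab : (b : ℕ) = (a : ℕ) + 1)
    (h0 : dotP (simpleRoot m (u a)) (simpleRoot m (u b)) = 0)
    (h0' : dotP (simpleRoot m (u b)) (simpleRoot m (u a)) = 0)
    (s : Fin N) :
    Nwt Λ (σ * Equiv.swap a b) u (Equiv.swap a b s)
      = Nwt Λ σ (u ∘ Equiv.swap a b) s := by
  rw [Nwt_expand, Nwt_expand]
  rw [sum_filter_perm (Equiv.swap a b)]
  simp only [Function.comp_apply, Equiv.Perm.mul_apply, Equiv.swap_apply_self]
  congr 1
  apply sum_filter_congr'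
  intro k
  by_cases hc : (k = a ∧ s = b) ∨ (k = b ∧ s = a)
  · right
    rcases hc with ⟨hk, hs⟩ | ⟨hk, hs⟩ <;> subst hk <;> subst hs <;>
      simp only [Equiv.swap_apply_left, Equiv.swap_apply_right]
    · exact h0'
    · exact h0
  · left
    rw [not_or] at hc
    have hle := swap_le_iff' hab hc.1 hc.2
    exact and_congr_left fun _ => hle

/-- The main auxiliary theorem, for an arbitrary weight `Λ`. -/
theorem pairing_swap_aux {m N : ℕ} (Λ : Fin m → ℤ) (u w : Fin N → ℕ) (a b : Fin N)
    (hab : (b : ℕ) = (a : ℕ) + 1) :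
    (2 ≤ |(u a : ℤ) - (u b : ℤ)| →
      pairing Λ (u ∘ Equiv.swap a b) w = pairing Λ u w) ∧
    (2 ≤ |(w a : ℤ) - (w b : ℤ)| →
      pairing Λ u (w ∘ Equiv.swap a b) = pairing Λ u w) := by
  constructor
  · intro hdist
    have h0 : dotP (simpleRoot m (u a)) (simpleRoot m (u b)) = 0 := orth_simpleRoot hdist
    have h0' : dotP (simpleRoot m (u b)) (simpleRoot m (u a)) = 0 :=
      orth_simpleRoot (by rwa [abs_sub_comm] at hdist)
    unfold pairing
    refine Finset.sum_nbij' (fun σ => σ * Equiv.swap a b) (fun σ => σ * Equiv.swap a b)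
      ?_ ?_ ?_ ?_ ?_
    · intro σ hσ
      simp only [Sset, Finset.mem_filter, Finset.mem_univ, true_and] at hσ ⊢
      intro j
      have := hσ (Equiv.swap a b j)
      simpa [Equiv.Perm.mul_apply] using this
    · intro σ hσ
      simp only [Sset, Finset.mem_filter, Finset.mem_univ, true_and] at hσ ⊢
      intro j
      have := hσ (Equiv.swap a b j)
      simpa [Equiv.Perm.mul_apply] using this
    · intro σ _
      simp [mul_assoc, Equiv.swap_mul_self]
    · intro σ _
      simp [mul_assoc, Equiv.swap_mul_self]
    · intro σ _
      unfold Xsig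
      rw [← Equiv.prod_comp (Equiv.swap a b)
        (fun r => qint (Nwt Λ (σ * Equiv.swap a b) u r) * T (Nwt Λ 1 u r - 1))]
      refine Finset.prod_congr rfl fun s _ => ?_
      have e1 : Nwt Λ (σ * Equiv.swap a b) u (Equiv.swap a b s)
          = Nwt Λ σ (u ∘ Equiv.swap a b) s := Nwt_swap_right Λ σ u hab h0 h0' s
      have e2 : Nwt Λ 1 u (Equiv.swap a b s) = Nwt Λ 1 (u ∘ Equiv.swap a b) s := by
        have ha : Nwt Λ (Equiv.swap a b * 1) u (Equiv.swap a b s)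
            = Nwt Λ 1 u (Equiv.swap a b s) := by
          refine Nwt_swap_left Λ 1 u hab ?_ ?_ _
          · intro j r hj hr
            simp only [Equiv.Perm.one_apply] at hj hr; subst hj; subst hr; exact h0
          · intro j r hj hr
            simp only [Equiv.Perm.one_apply] at hj hr; subst hj; subst hr; exact h0'
        have hb : Nwt Λ (1 * Equiv.swap a b) u (Equiv.swap a b s)
            = Nwt Λ 1 (u ∘ Equiv.swap a b) s := Nwt_swap_right Λ 1 u hab h0 h0' s
        rw [← hb, show (1 * Equiv.swap a b : Equiv.Perm (Fin N))
          = Equiv.swap a b * 1 by rw [one_mul, mul_one]]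
        exact ha.symm
      rw [e1, e2]
  · intro hdist
    unfold pairing
    refine Finset.sum_nbij' (fun σ => Equiv.swap a b * σ) (fun σ => Equiv.swap a b * σ)
      ?_ ?_ ?_ ?_ ?_
    · intro σ hσ
      simp only [Sset, Finset.mem_filter, Finset.mem_univ, true_and] at hσ ⊢
      intro j
      simpa [Equiv.Perm.mul_apply] using hσ j
    · intro σ hσ
      simp only [Sset, Finset.mem_filter, Finset.mem_univ, true_and] at hσ ⊢
      intro j
      have := hσ j
      simp only [Equiv.Perm.mul_apply] at this ⊢
      simpa [Function.comp_apply, Equiv.swap_apply_self] using this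
    · intro σ _
      simp [← mul_assoc, Equiv.swap_mul_self]
    · intro σ _
      simp [← mul_assoc, Equiv.swap_mul_self]
    · intro σ hσ
      simp only [Sset, Finset.mem_filter, Finset.mem_univ, true_and] at hσ
      unfold Xsig
      refine Finset.prod_congr rfl fun r _ => ?_
      have : Nwt Λ (Equiv.swap a b * σ) u r = Nwt Λ σ u r := by
        refine Nwt_swap_left Λ σ u hab ?_ ?_ r
        · intro j r' hj hr'
          rw [hσ j, hσ r', hj, hr', Function.comp_apply, Function.comp_apply,
            Equiv.swap_apply_left, Equiv.swap_apply_right]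
          exact orth_simpleRoot (by rwa [abs_sub_comm] at hdist)
        · intro j r' hj hr'
          rw [hσ j, hσ r', hj, hr', Function.comp_apply, Function.comp_apply,
            Equiv.swap_apply_left, Equiv.swap_apply_right]
          exact orth_simpleRoot hdist
      rw [this]

/-- Distant swaps leave the closed formula invariant: if two adjacent entries of
`ū` (resp. of `w̄`) differ by at least 2, exchanging them does not change
`⟪ū,w̄⟫`. -/
theorem pairing_distant_swap (m n ℓ N : ℕ) (hm : 2 ≤ m) (hn : 1 ≤ n) (hℓ : ℓ ≤ m)
    (u w : Fin N → ℕ) (hu : ∀ s, 1 ≤ u s ∧ u s ≤ m - 1) (hw : ∀ s, 1 ≤ w s ∧ w s ≤ m - 1)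
    (t : ℕ) (ht : t + 1 < N) :
    (2 ≤ |(u ⟨t, by omega⟩ : ℤ) - (u ⟨t + 1, ht⟩ : ℤ)| →
      pairing (LambdaVec m n ℓ) (u ∘ Equiv.swap ⟨t, by omega⟩ ⟨t + 1, ht⟩) w
        = pairing (LambdaVec m n ℓ) u w) ∧
    (2 ≤ |(w ⟨t, by omega⟩ : ℤ) - (w ⟨t + 1, ht⟩ : ℤ)| →
      pairing (LambdaVec m n ℓ) u (w ∘ Equiv.swap ⟨t, by omega⟩ ⟨t + 1, ht⟩)
        = pairing (LambdaVec m n ℓ) u w) := by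
  exact pairing_swap_aux (LambdaVec m n ℓ) u w ⟨t, by omega⟩ ⟨t + 1, ht⟩ rfl

end
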